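/- The algebraic multiplicity of any eigenvalue β of a λ-quasi-twisted code C equals its geometric multiplicity, i.e., the multiplicity of (x−β) in det(G̃(x)) = ∏_j g_{j,j}(x) equals the dimension over F of the null space of G̃(β). -/

import Mathlib

open Polynomial Matrix



/-- The `F_q[x]`-submodule of `F_q[x]^ℓ` spanned by the rows of `G`. -/
noncomputable def qtSpan {F : Type*} [Field F] {ℓ : ℕ}
    (G : Matrix (Fin ℓ) (Fin ℓ) (Polynomial F)) :
    Submodule (Polynomial F) (Fin ℓ → Polynomial F) :=
  Submodule.span (Polynomial F) (Set.range fun i => G i)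

/-- The `F`-linear map sending an `m × ℓ` array over `F` to the vector of
column polynomials `c_j(x) = ∑_k c_{k,j} x^k`. -/
noncomputable def toPolyL (F : Type*) [CommSemiring F] (m ℓ : ℕ) :
    (Fin m × Fin ℓ → F) →ₗ[F] (Fin ℓ → Polynomial F) where
  toFun c := fun j => ∑ k : Fin m, Polynomial.C (c (k, j)) * Polynomial.X ^ (k : ℕ)
  map_add' c c' := by
    funext j
    simp [map_add, add_mul, Finset.sum_add_distrib]
  map_smul' a c := by
    funext j
    simp [Polynomial.smul_eq_C_mul, Finset.mul_sum, mul_assoc]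



lemma aux_card_filter_lt {ℓ k : ℕ} (hk : k ≤ ℓ) :
    (Finset.univ.filter fun j : Fin ℓ => (j : ℕ) < k).card = k := by
  rw [← Fintype.card_fin k]
  apply Finset.card_bij (fun (j : Fin ℓ) _ => (⟨(j : ℕ), by
    simp_all [Finset.mem_filter]⟩ : Fin k))
  · intro a ha; exact Finset.mem_univ _
  · intro a ha b hb h
    simpa [Fin.ext_iff] using congrArg (fun x : Fin k => (x : ℕ)) h
  · intro b _
    refine ⟨⟨(b : ℕ), lt_of_lt_of_le b.2 hk⟩, ?_, rfl⟩
    simp [Finset.mem_filter, b.2]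

lemma aux_ker_le_rootMult {E : Type*} [Field E] {ℓ : ℕ} (β : E)
    (M : Matrix (Fin ℓ) (Fin ℓ) (Polynomial E)) (hdet : M.det ≠ 0) :
    Module.finrank E ↥(LinearMap.ker (Matrix.mulVecLin (M.map (Polynomial.eval β)))) ≤
      Polynomial.rootMultiplicity β M.det := by
  classical
  set Mβ := M.map (Polynomial.eval β) with hMβ
  set K := LinearMap.ker (Matrix.mulVecLin Mβ) with hKdef
  set k := Module.finrank E ↥K with hk
  obtain ⟨W, hW⟩ := Submodule.exists_isCompl K
  have hsum : Module.finrank E ↥K + Module.finrank E ↥W = ℓ := by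
    rw [Submodule.finrank_add_eq_of_isCompl hW]
    simp [Module.finrank_pi]
  have hkle : k ≤ ℓ := by omega
  let bK : Module.Basis (Fin k) E ↥K := Module.finBasisOfFinrankEq E ↥K hk.symm
  let bW : Module.Basis (Fin (ℓ - k)) E ↥W := Module.finBasisOfFinrankEq E ↥W (by omega)
  let e := Submodule.prodEquivOfIsCompl K W hW
  let b0 : Module.Basis (Fin k ⊕ Fin (ℓ - k)) E (Fin ℓ → E) := (bK.prod bW).map e
  have hkℓ : k + (ℓ - k) = ℓ := by omega
  let b : Module.Basis (Fin ℓ) E (Fin ℓ → E) := b0.reindex (finSumFinEquiv.trans (finCongr hkℓ))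
  have hbmem : ∀ j : Fin ℓ, (j : ℕ) < k → b j ∈ K := by
    intro j hj
    have h1 : (finSumFinEquiv.trans (finCongr hkℓ)) (Sum.inl ⟨(j : ℕ), hj⟩) = j := by
      simp [Fin.ext_iff]
    have h2 : b j = b0 (Sum.inl ⟨(j : ℕ), hj⟩) := by
      rw [Module.Basis.reindex_apply]
      exact congrArg b0 ((Equiv.symm_apply_eq _).mpr h1.symm)
    rw [h2]
    show ((bK.prod bW).map e) (Sum.inl _) ∈ K
    rw [Module.Basis.map_apply]
    have h3 : (bK.prod bW) (Sum.inl ⟨(j : ℕ), hj⟩) = (bK ⟨(j : ℕ), hj⟩, 0) := by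
      ext
      · simp [Module.Basis.prod_apply_inl_fst]
      · simp [Module.Basis.prod_apply_inl_snd]
    rw [h3]
    show (Submodule.prodEquivOfIsCompl K W hW) _ ∈ K
    rw [Submodule.coe_prodEquivOfIsCompl']
    simp
  -- the invertible change of basis matrix
  let Q : Matrix (Fin ℓ) (Fin ℓ) E := Matrix.of fun i j => b j i
  have hQ : Q = (Pi.basisFun E (Fin ℓ)).toMatrix b := by
    ext i j
    simp [Q, Module.Basis.toMatrix_apply]
  have hQdet : Q.det ≠ 0 := by
    rw [hQ]
    have := (Pi.basisFun E (Fin ℓ)).invertibleToMatrix b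
    exact (Matrix.isUnit_det_of_invertible _).ne_zero
  let M' : Matrix (Fin ℓ) (Fin ℓ) (Polynomial E) := M * Q.map Polynomial.C
  have hcol : ∀ (i j : Fin ℓ), (j : ℕ) < k → (X - Polynomial.C β) ∣ M' i j := by
    intro i j hj
    rw [dvd_iff_isRoot]
    have hker : Mβ.mulVec (b j) = 0 := by
      have := hbmem j hj
      rwa [hKdef, LinearMap.mem_ker, Matrix.mulVecLin_apply] at this
    have : Polynomial.eval β (M' i j) = Mβ.mulVec (b j) i := by
      simp only [M', Matrix.mul_apply, Polynomial.eval_finset_sum, Polynomial.eval_mul,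
        Polynomial.eval_C, Matrix.map_apply, Matrix.mulVec, dotProduct, hMβ]
      rfl
    simp [IsRoot, this, hker]
  let N : Matrix (Fin ℓ) (Fin ℓ) (Polynomial E) :=
    Matrix.of fun i j => if (j : ℕ) < k then M' i j / (X - Polynomial.C β) else M' i j
  have hfac : M' = Matrix.of fun (i j : Fin ℓ) =>
      (if (j : ℕ) < k then (X - Polynomial.C β) else 1) * N i j := by
    refine Matrix.ext fun i j => ?_
    by_cases hj : (j : ℕ) < k
    · simp only [Matrix.of_apply, N, hj, if_pos]
      exact (EuclideanDomain.mul_div_cancel' (X_sub_C_ne_zero β) (hcol i j hj)).symm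
    · simp [N, hj]
  have hdet' : M'.det = (X - Polynomial.C β) ^ k * N.det := by
    rw [hfac, Matrix.det_mul_row]
    congr 1
    rw [Finset.prod_ite, Finset.prod_const, Finset.prod_const, one_pow, mul_one,
      aux_card_filter_lt hkle]
  have hdvd : (X - Polynomial.C β) ^ k ∣ M.det * Polynomial.C Q.det := by
    have h1 : M'.det = M.det * Polynomial.C Q.det := by
      rw [Matrix.det_mul]
      congr 1
      exact ((Polynomial.C : E →+* Polynomial E).map_det Q).symm
    rw [← h1, hdet']
    exact Dvd.intro _ rfl
  have hdvd2 : (X - Polynomial.C β) ^ k ∣ M.det := by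
    have hu : IsUnit (Polynomial.C Q.det) := Polynomial.isUnit_C.mpr hQdet.isUnit
    exact (hu.dvd_mul_right).mp hdvd
  exact (Polynomial.le_rootMultiplicity_iff hdet).mpr hdvd2


lemma aux_rootMult_pow {E : Type*} [Field E] (β : E) (p : Polynomial E) (hp : p ≠ 0) (n : ℕ) :
    Polynomial.rootMultiplicity β (p ^ n) = n * Polynomial.rootMultiplicity β p := by
  induction n with
  | zero => simp
  | succ n ih =>
    rw [pow_succ, Polynomial.rootMultiplicity_mul (mul_ne_zero (pow_ne_zero n hp) hp), ih]
    ring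

/-- The algebraic multiplicity of an eigenvalue of a quasi-twisted code equals
its geometric multiplicity. -/
theorem stmt11 {F E : Type*} [Field F] [Fintype F] [Field E] [Algebra F E]
    (m ℓ : ℕ) (hm : 0 < m) (hℓ : 0 < ℓ)
    (hco : Nat.Coprime m (Fintype.card F)) (lam : F) (hlam : lam ≠ 0)
    (G : Matrix (Fin ℓ) (Fin ℓ) (Polynomial F))
    (hupper : ∀ i j, j < i → G i j = 0)
    (hmonic : ∀ j, (G j j).Monic)
    (hdiag : ∀ j, G j j ∣ X ^ m - C lam)
    (hdeg : ∀ i j, i < j → (G i j).degree < (G j j).degree)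
    (hfull : ∀ i j, i ≠ j → G j j = X ^ m - C lam → G i j = 0)
    (hK : ∀ j : Fin ℓ, (fun j' => if j' = j then X ^ m - C lam else 0) ∈ qtSpan G)
    (hsplit : Polynomial.Splits ((X ^ m - C lam).map (algebraMap F E)))
    (β : E) (hβ : Polynomial.aeval β (∏ j, G j j) = 0) :
    Polynomial.rootMultiplicity β ((∏ j, G j j).map (algebraMap F E)) =
      Module.finrank E
        ↥(LinearMap.ker (Matrix.mulVecLin
          (Matrix.of fun i j => Polynomial.aeval β (G i j)))) := by
  classical
  set φ := algebraMap F E with hφ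
  set ψ : Polynomial F →+* Polynomial E := Polynomial.mapRingHom φ with hψ
  -- build the complementary matrix A with A * G = (X^m - C lam) • 1
  have hA : ∀ j : Fin ℓ, ∃ cc : Fin ℓ → Polynomial F,
      ∑ i, cc i • G i = fun j' => if j' = j then X ^ m - C lam else 0 := by
    intro j
    exact (Submodule.mem_span_range_iff_exists_fun _).mp (hK j)
  choose c hc using hA
  set A : Matrix (Fin ℓ) (Fin ℓ) (Polynomial F) := Matrix.of (fun j i => c j i) with hAdef
  have hAG : A * G = (X ^ m - C lam) • (1 : Matrix (Fin ℓ) (Fin ℓ) (Polynomial F)) := by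
    refine Matrix.ext fun j j' => ?_
    have h1 := congrFun (hc j) j'
    simp only [Finset.sum_apply, Pi.smul_apply, smul_eq_mul] at h1
    simp only [Matrix.mul_apply, hAdef, Matrix.of_apply, Matrix.smul_apply, Matrix.one_apply,
      smul_eq_mul]
    rw [h1]
    by_cases h : j' = j
    · simp [h]
    · simp [h, Ne.symm h]
  set G' := G.map ψ with hG'def
  set A' := A.map ψ with hA'def
  set w : Polynomial E := X ^ m - Polynomial.C (φ lam) with hwdef
  have hψw : ψ (X ^ m - C lam) = w := by
    simp [hψ, hwdef, Polynomial.map_sub, Polynomial.map_pow]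
  have hAG' : A' * G' = w • (1 : Matrix (Fin ℓ) (Fin ℓ) (Polynomial E)) := by
    refine Matrix.ext fun j j' => ?_
    have h1 : (A' * G') j j' = ψ ((A * G) j j') := by
      simp [Matrix.mul_apply, hA'def, hG'def, map_sum, Matrix.map_apply]
    rw [h1, hAG]
    by_cases h : j = j' <;>
      simp [Matrix.smul_apply, Matrix.one_apply, h, hψw]
  have hdetG : G.det = ∏ j, G j j :=
    Matrix.det_of_upperTriangular (by intro i j hij; exact hupper i j hij)
  have hdetG' : G'.det = (∏ j, G j j).map φ := by
    have h1 := (ψ.map_det G).symm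
    rw [RingHom.mapMatrix_apply] at h1
    rw [hG'def, h1, hdetG]
    rfl
  -- separability facts
  have hlamE : φ lam ≠ 0 := fun h => hlam ((_root_.map_eq_zero φ).mp h)
  have hmE : (m : E) ≠ 0 := by
    have hmF : (m : F) ≠ 0 := by
      haveI := ringChar.charP F
      have hp : (ringChar F).Prime := CharP.char_is_prime F (ringChar F)
      haveI := Fact.mk hp
      obtain ⟨n, hn⟩ := FiniteField.card F (ringChar F)
      intro h
      have hpm : ringChar F ∣ m := (CharP.cast_eq_zero_iff F (ringChar F) m).mp h
      have hpcard : ringChar F ∣ Fintype.card F := by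
        rw [hn.2]; exact dvd_pow_self _ n.2.ne'
      have hone : ringChar F ∣ 1 := hco ▸ Nat.dvd_gcd hpm hpcard
      exact hp.one_lt.ne' (Nat.dvd_one.mp hone)
    intro h
    apply hmF
    have h2 : φ (m : F) = 0 := by rw [map_natCast]; exact h
    exact (_root_.map_eq_zero φ).mp h2
  have hw0 : w ≠ 0 := Polynomial.X_pow_sub_C_ne_zero hm (φ lam)
  have hsep : w.Separable := Polynomial.separable_X_pow_sub_C (φ lam) hmE hlamE
  have hroot : Polynomial.eval β w = 0 := by
    have hβ' : ∏ j, Polynomial.aeval β (G j j) = 0 := by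
      rw [← map_prod]; exact hβ
    obtain ⟨j, -, hj⟩ := Finset.prod_eq_zero_iff.mp hβ'
    obtain ⟨d, hd⟩ := hdiag j
    have h2 : Polynomial.aeval β ((X : Polynomial F) ^ m - C lam) = 0 := by
      rw [hd, _root_.map_mul, hj, zero_mul]
    simp only [map_sub, map_pow, Polynomial.aeval_X, Polynomial.aeval_C] at h2
    simp [hwdef, hφ, h2]
  have hmw : Polynomial.rootMultiplicity β w = 1 := by
    have h1 : 0 < Polynomial.rootMultiplicity β w :=
      (Polynomial.rootMultiplicity_pos hw0).mpr hroot
    have h2 : Polynomial.rootMultiplicity β w ≤ 1 := by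
      by_contra h
      push_neg at h
      have hdvd : (X - Polynomial.C β) * (X - Polynomial.C β) ∣ w := by
        calc (X - Polynomial.C β) * (X - Polynomial.C β)
            = (X - Polynomial.C β) ^ 2 := (sq _).symm
          _ ∣ (X - Polynomial.C β) ^ Polynomial.rootMultiplicity β w := pow_dvd_pow _ h
          _ ∣ w := Polynomial.pow_rootMultiplicity_dvd w β
      exact Polynomial.not_isUnit_X_sub_C β (hsep.squarefree _ hdvd)
    omega
  have hdetprod : A'.det * G'.det = w ^ ℓ := by
    have h1 := congrArg Matrix.det hAG'
    rw [Matrix.det_mul] at h1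
    rw [h1, Matrix.det_smul, Matrix.det_one, mul_one, Fintype.card_fin]
  have hG'0 : G'.det ≠ 0 := by
    rw [hdetG']
    rw [Polynomial.map_ne_zero_iff φ.injective]
    exact (Polynomial.monic_prod_of_monic _ _ fun j _ => hmonic j).ne_zero
  have hA'0 : A'.det ≠ 0 := by
    intro h
    rw [h, zero_mul] at hdetprod
    exact pow_ne_zero ℓ hw0 hdetprod.symm
  have hrmsum : ℓ = Polynomial.rootMultiplicity β A'.det +
      Polynomial.rootMultiplicity β G'.det := by
    have h1 := Polynomial.rootMultiplicity_mul (x := β)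
      (show A'.det * G'.det ≠ 0 by rw [hdetprod]; exact pow_ne_zero ℓ hw0)
    rw [hdetprod, aux_rootMult_pow β w hw0 ℓ, hmw, mul_one] at h1
    exact h1
  -- evaluated matrices
  set Gβ : Matrix (Fin ℓ) (Fin ℓ) E := Matrix.of (fun i j => Polynomial.aeval β (G i j))
    with hGβdef
  have hGβ : Gβ = G'.map (Polynomial.eval β) := by
    refine Matrix.ext fun i j => ?_
    simp [hGβdef, hG'def, Matrix.map_apply, Polynomial.eval_map, Polynomial.aeval_def, hψ, hφ]
  set Aβ := A'.map (Polynomial.eval β) with hAβdef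
  have hmul0 : Aβ * Gβ = 0 := by
    refine Matrix.ext fun i j => ?_
    have h1 : (Aβ * Gβ) i j = Polynomial.eval β ((A' * G') i j) := by
      simp [Matrix.mul_apply, hAβdef, hGβ, Matrix.map_apply, Polynomial.eval_finset_sum]
    rw [h1, hAG']
    by_cases h : i = j <;>
      simp [Matrix.smul_apply, Matrix.one_apply, h, hroot]
  have hrange : LinearMap.range Gβ.mulVecLin ≤ LinearMap.ker Aβ.mulVecLin := by
    rintro x ⟨v, rfl⟩
    rw [LinearMap.mem_ker, Matrix.mulVecLin_apply, Matrix.mulVecLin_apply,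
      Matrix.mulVec_mulVec, hmul0]
    simp
  have hfin1 := LinearMap.finrank_range_add_finrank_ker Gβ.mulVecLin
  have hpi : Module.finrank E (Fin ℓ → E) = ℓ := by
    simp [Module.finrank_pi]
  rw [hpi] at hfin1
  have hL1G : Module.finrank E ↥(LinearMap.ker Gβ.mulVecLin) ≤
      Polynomial.rootMultiplicity β G'.det := by
    rw [hGβ]; exact aux_ker_le_rootMult β G' hG'0
  have hL1A : Module.finrank E ↥(LinearMap.ker Aβ.mulVecLin) ≤
      Polynomial.rootMultiplicity β A'.det := aux_ker_le_rootMult β A' hA'0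
  have hle : Module.finrank E ↥(LinearMap.range Gβ.mulVecLin) ≤
      Module.finrank E ↥(LinearMap.ker Aβ.mulVecLin) := Submodule.finrank_mono hrange
  rw [← hdetG']
  omega
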